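/- Let A, B > 0, α, β > 0, D_inf ≥ 0, E, ℓ be real numbers with ℓ > E, and set D_min = (B/(ℓ − E))^(1/β). If D* > D_min is a local minimum of C(D) = (6·D + 2·D_inf)·(A/(ℓ − E − B·D^(−β)))^(1/α) on (D_min, ∞), then D* satisfies Eq. 11: 0 = (E − ℓ) + (β·B/α + B)·(D*)^(−β) + (D_inf·β·B/(3·α))·(D*)^(−β−1). -/

import Mathlib

/-- First-order condition: a local minimum `D* > D_min` of the total compute
`C(D) = (6·D + 2·D_inf)·(A/(ℓ−E−B·D^(−β)))^(1/α)` on `(D_min, ∞)` satisfies Eq. 11. -/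
theorem local_min_satisfies_eq11 (A B α β Dinf E ℓ Dstar : ℝ)
    (hA : 0 < A) (hB : 0 < B) (hα : 0 < α) (hβ : 0 < β) (hDinf : 0 ≤ Dinf)
    (hℓ : E < ℓ)
    (hDstar : (B / (ℓ - E)) ^ (1 / β) < Dstar)
    (hmin : IsLocalMinOn
      (fun D : ℝ => (6 * D + 2 * Dinf) * (A / (ℓ - E - B * D ^ (-β))) ^ (1 / α))
      (Set.Ioi ((B / (ℓ - E)) ^ (1 / β))) Dstar) :
    0 = (E - ℓ) + (β * B / α + B) * Dstar ^ (-β)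
      + (Dinf * β * B / (3 * α)) * Dstar ^ (-β - 1) := by
  have hE : (0:ℝ) < ℓ - E := sub_pos.mpr hℓ
  have hDminpos : 0 < (B / (ℓ - E)) ^ (1 / β) :=
    Real.rpow_pos_of_pos (div_pos hB hE) _
  have hD0 : 0 < Dstar := hDminpos.trans hDstar
  -- positivity of g = ℓ - E - B * Dstar ^ (-β)
  have hpow : B / (ℓ - E) < Dstar ^ β := by
    have h1 : ((B / (ℓ - E)) ^ (1 / β)) ^ β < Dstar ^ β :=
      Real.rpow_lt_rpow hDminpos.le hDstar hβ
    rwa [← Real.rpow_mul (le_of_lt (div_pos hB hE)), one_div,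
      inv_mul_cancel₀ hβ.ne', Real.rpow_one] at h1
  have hβD : 0 < Dstar ^ β := Real.rpow_pos_of_pos hD0 β
  have hg : 0 < ℓ - E - B * Dstar ^ (-β) := by
    have : B * Dstar ^ (-β) < ℓ - E := by
      rw [Real.rpow_neg hD0.le]
      rw [div_lt_iff₀ hE] at hpow
      rw [mul_comm] at hpow
      calc B * (Dstar ^ β)⁻¹ < ((ℓ - E) * Dstar ^ β) * (Dstar ^ β)⁻¹ := by
            exact mul_lt_mul_of_pos_right hpow (inv_pos.mpr hβD)
        _ = ℓ - E := by field_simp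
    linarith
  set g : ℝ := ℓ - E - B * Dstar ^ (-β) with hgdef
  set t : ℝ := Dstar ^ (-β - 1) with htdef
  -- derivative chain
  have h1 : HasDerivAt (fun D : ℝ => D ^ (-β)) (-β * t) Dstar := by
    simpa using Real.hasDerivAt_rpow_const (p := -β) (Or.inl hD0.ne')
  have h2 : HasDerivAt (fun D : ℝ => ℓ - E - B * D ^ (-β)) (-(B * (-β * t))) Dstar := by
    exact (h1.const_mul B).const_sub (ℓ - E)
  have h3 : HasDerivAt (fun D : ℝ => A / (ℓ - E - B * D ^ (-β)))
      ((0 * g - A * (-(B * (-β * t)))) / g ^ 2) Dstar :=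
    (hasDerivAt_const Dstar A).div h2 hg.ne'
  have h4 : HasDerivAt (fun D : ℝ => (A / (ℓ - E - B * D ^ (-β))) ^ (1 / α))
      (((0 * g - A * (-(B * (-β * t)))) / g ^ 2) * (1 / α) * (A / g) ^ (1 / α - 1)) Dstar :=
    h3.rpow_const (Or.inl (div_pos hA hg).ne')
  have h5 : HasDerivAt (fun D : ℝ => 6 * D + 2 * Dinf) 6 Dstar := by
    simpa using ((hasDerivAt_id Dstar).const_mul (6:ℝ)).add_const (2 * Dinf)
  have h6 := h5.mul h4
  have hloc : IsLocalMin
      (fun D : ℝ => (6 * D + 2 * Dinf) * (A / (ℓ - E - B * D ^ (-β))) ^ (1 / α)) Dstar :=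
    hmin.isLocalMin (Ioi_mem_nhds hDstar)
  have heq := hloc.hasDerivAt_eq_zero h6
  -- rewrite (A/g)^(1/α) in terms of (A/g)^(1/α - 1)
  have hAg : 0 < A / g := div_pos hA hg
  have hK : 0 < (A / g) ^ (1 / α - 1) := Real.rpow_pos_of_pos hAg _
  have hsplit : (A / g) ^ (1 / α) = (A / g) ^ (1 / α - 1) * (A / g) := by
    rw [← Real.rpow_add_one hAg.ne']; ring_nf
  rw [hsplit] at heq
  -- extract the first-order condition: 6 * g * α = (6*Dstar + 2*Dinf) * β * B * t
  have hfo : 6 * g * α = (6 * Dstar + 2 * Dinf) * (β * B * t) := by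
    have hg2 : g ^ 2 ≠ 0 := pow_ne_zero 2 hg.ne'
    field_simp at heq
    set K : ℝ := (A / g) ^ ((1 - α) / α) with hKdef
    have hKpos : 0 < K := Real.rpow_pos_of_pos hAg _
    have hz : K * A * g * (6 * g * α - (6 * Dstar + 2 * Dinf) * (β * B * t)) = 0 := by
      linear_combination g * heq
    have := mul_eq_zero.mp hz
    rcases this with h | h
    · exact absurd h (by positivity)
    · linarith
  -- relate t and Dstar^(-β)
  have hst : Dstar ^ (-β) = t * Dstar := by
    rw [htdef, ← Real.rpow_add_one hD0.ne' (-β - 1)]; ring_nf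
  -- final algebra
  have hfo2 : 6 * (ℓ - E - B * Dstar ^ (-β)) * α = (6 * Dstar + 2 * Dinf) * (β * B * t) := hfo
  rw [hst] at hfo2 ⊢
  field_simp
  nlinarith [hfo2, hα]
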